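/- Let τ > 0 and define u : ℝ² → ℝ by u(x,y) = −τxy and v : ℝ² → ℝ by v(x,y) = (1/(4τ²) + x²)^(1/2). Then v_x² + v_y² < 1 everywhere and u and v satisfy the twin relations u_x = v_y/ω̃ − τy and u_y = −v_x/ω̃ + τx on ℝ², where ω̃ = (1 − v_x² − v_y²)^(1/2); consequently v satisfies the spacelike constant-mean-curvature-τ equation (1−v_y²)v_xx + 2 v_x v_y v_xy + (1−v_x²)v_yy = 2τ ω̃³ on ℝ². -/

import Mathlib

/-- Partial derivative in the `x` direction. -/
noncomputable def px (f : ℝ × ℝ → ℝ) (p : ℝ × ℝ) : ℝ := fderiv ℝ f p (1, 0)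

/-- Partial derivative in the `y` direction. -/
noncomputable def py (f : ℝ × ℝ → ℝ) (p : ℝ × ℝ) : ℝ := fderiv ℝ f p (0, 1)

/-- Lorentzian area element `ω̃ = (1 − v_x² − v_y²)^(1/2)` of the graph of `v`. -/
noncomputable def omegT (v : ℝ × ℝ → ℝ) (p : ℝ × ℝ) : ℝ :=
  Real.sqrt (1 - (px v p) ^ 2 - (py v p) ^ 2)

/-- The invariant minimal graph `u(x,y) = −τxy` in `Nil₃(τ)`. -/
noncomputable def invGraph (τ : ℝ) : ℝ × ℝ → ℝ := fun p => -τ * p.1 * p.2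

/-- The hyperbolic cylinder `v(x,y) = (1/(4τ²) + x²)^(1/2)` in `𝕃³`. -/
noncomputable def hypCylinder (τ : ℝ) : ℝ × ℝ → ℝ :=
  fun p => Real.sqrt (1 / (4 * τ ^ 2) + p.1 ^ 2)

lemma pd_comp_fst (φ : ℝ → ℝ) {d : ℝ} (p : ℝ × ℝ) (h : HasDerivAt φ d p.1) :
    px (fun q => φ q.1) p = d ∧ py (fun q => φ q.1) p = 0 := by
  have H : HasFDerivAt (fun q : ℝ × ℝ => φ q.1) (d • (ContinuousLinearMap.fst ℝ ℝ ℝ)) p :=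
    h.comp_hasFDerivAt p hasFDerivAt_fst
  constructor <;> simp [px, py, H.fderiv]

/-- for `τ > 0`, the invariant minimal graph `u = −τxy` in
`Nil₃(τ)` and the hyperbolic cylinder `v = (1/(4τ²) + x²)^(1/2)` in `𝕃³` are
dual graphs: `v` is spacelike, `u` and `v` satisfy the twin relations, and
consequently `v` satisfies the spacelike CMC-`τ` equation. -/
theorem invariant_graph_hyperbolic_cylinder_dual (τ : ℝ) (hτ : 0 < τ) :
    ∀ p : ℝ × ℝ,
      ((px (hypCylinder τ) p) ^ 2 + (py (hypCylinder τ) p) ^ 2 < 1) ∧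
      (px (invGraph τ) p = py (hypCylinder τ) p / omegT (hypCylinder τ) p - τ * p.2) ∧
      (py (invGraph τ) p = -px (hypCylinder τ) p / omegT (hypCylinder τ) p + τ * p.1) ∧
      ((1 - (py (hypCylinder τ) p) ^ 2) * px (px (hypCylinder τ)) p
          + 2 * px (hypCylinder τ) p * py (hypCylinder τ) p * py (px (hypCylinder τ)) p
          + (1 - (px (hypCylinder τ) p) ^ 2) * py (py (hypCylinder τ)) p
          = 2 * τ * (omegT (hypCylinder τ) p) ^ 3) := by
  intro p
  have hτ0 : τ ≠ 0 := ne_of_gt hτ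
  have hs : ∀ t : ℝ, (0:ℝ) < 1 / (4 * τ ^ 2) + t ^ 2 := fun t => by positivity
  -- first derivative of the one-variable profile
  have hsqrt : ∀ t : ℝ, HasDerivAt (fun s : ℝ => Real.sqrt (1 / (4 * τ ^ 2) + s ^ 2))
      (t / Real.sqrt (1 / (4 * τ ^ 2) + t ^ 2)) t := by
    intro t
    have h1 : HasDerivAt (fun s : ℝ => 1 / (4 * τ ^ 2) + s ^ 2) (2 * t) t := by
      have h := (hasDerivAt_pow 2 t).const_add (1 / (4 * τ ^ 2))
      simpa using h
    have h2 := (Real.hasDerivAt_sqrt (hs t).ne').comp t h1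
    have ha : (0:ℝ) < Real.sqrt (1 / (4 * τ ^ 2) + t ^ 2) := Real.sqrt_pos.mpr (hs t)
    refine h2.congr_deriv ?_
    field_simp
  have hpx : px (hypCylinder τ) = fun q : ℝ × ℝ => q.1 / Real.sqrt (1 / (4 * τ ^ 2) + q.1 ^ 2) :=
    funext fun q => (pd_comp_fst _ q (hsqrt q.1)).1
  have hpy : py (hypCylinder τ) = fun _ : ℝ × ℝ => (0:ℝ) :=
    funext fun q => (pd_comp_fst _ q (hsqrt q.1)).2
  set a := Real.sqrt (1 / (4 * τ ^ 2) + p.1 ^ 2) with hadef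
  have ha : 0 < a := Real.sqrt_pos.mpr (hs p.1)
  have ha2 : a ^ 2 = 1 / (4 * τ ^ 2) + p.1 ^ 2 := Real.sq_sqrt (hs p.1).le
  have ha2' : 4 * τ ^ 2 * a ^ 2 = 1 + 4 * τ ^ 2 * p.1 ^ 2 := by
    rw [ha2]; field_simp
  have hvx : px (hypCylinder τ) p = p.1 / a := (pd_comp_fst _ p (hsqrt p.1)).1
  have hvy : py (hypCylinder τ) p = 0 := (pd_comp_fst _ p (hsqrt p.1)).2
  -- second derivative
  have hψ : HasDerivAt (fun t : ℝ => t / Real.sqrt (1 / (4 * τ ^ 2) + t ^ 2))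
      ((1 / (4 * τ ^ 2)) / a ^ 3) p.1 := by
    have h := (hasDerivAt_id p.1).div (hsqrt p.1) ha.ne'
    refine h.congr_deriv ?_
    rw [← hadef]
    field_simp
    simp only [id]
    linear_combination ha2'
  have hpxx : px (px (hypCylinder τ)) p = (1 / (4 * τ ^ 2)) / a ^ 3 := by
    rw [hpx]; exact (pd_comp_fst _ p hψ).1
  have hpyx : py (px (hypCylinder τ)) p = 0 := by
    rw [hpx]; exact (pd_comp_fst _ p hψ).2
  have hpyy : py (py (hypCylinder τ)) p = 0 := by
    rw [hpy]; simp [py]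
  -- the area element
  have homeg : omegT (hypCylinder τ) p = 1 / (2 * τ * a) := by
    have h1 : 1 - (px (hypCylinder τ) p) ^ 2 - (py (hypCylinder τ) p) ^ 2
        = (1 / (2 * τ * a)) ^ 2 := by
      rw [hvx, hvy]
      field_simp
      linear_combination ha2'
    rw [omegT, h1, Real.sqrt_sq (by positivity)]
  -- derivatives of invGraph
  have hu : HasFDerivAt (invGraph τ)
      ((-τ * p.1) • (ContinuousLinearMap.snd ℝ ℝ ℝ)
        + p.2 • ((-τ) • (ContinuousLinearMap.fst ℝ ℝ ℝ))) p :=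
    (hasFDerivAt_fst.const_mul (-τ)).mul hasFDerivAt_snd
  have hux : px (invGraph τ) p = -τ * p.2 := by
    rw [px, hu.fderiv]; simp; ring
  have huy : py (invGraph τ) p = -τ * p.1 := by
    rw [py, hu.fderiv]; simp
  refine ⟨?_, ?_, ?_, ?_⟩
  · rw [hvx, hvy]
    have hc : (0:ℝ) < 1 / (4 * τ ^ 2) := by positivity
    rw [div_pow]
    have : p.1 ^ 2 / a ^ 2 < 1 := by
      rw [div_lt_one (by positivity)]
      linarith [ha2, hc]
    linarith
  · rw [hux, hvy, homeg]; simp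
  · rw [huy, hvx, homeg]
    field_simp
    ring
  · rw [hpxx, hpyx, hpyy, hvx, hvy, homeg]
    field_simp
    ring
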